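/- If R is right small injective, then every principal small left ideal of R is a left annihilator: for a ∈ J(R), Ra = l(r(a)). -/

import Mathlib

/-- A right ideal `I` of `R` (viewed as a submodule of `R` over `Rᵐᵒᵖ`) is small if
`I + K ≠ R` for every proper right ideal `K`. -/
def IsSmallRightIdeal {R : Type*} [Ring R] (I : Submodule Rᵐᵒᵖ R) : Prop :=
  ∀ K : Submodule Rᵐᵒᵖ R, I ⊔ K = ⊤ → K = ⊤

/-- A right `R`-module `M` is small injective if every `R`-homomorphism from a small right
ideal of `R` to `M` extends to a homomorphism `R → M`. -/
def SmallInjective (R : Type*) [Ring R] (M : Type*) [AddCommGroup M] [Module Rᵐᵒᵖ M] : Prop :=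
  ∀ I : Submodule Rᵐᵒᵖ R, IsSmallRightIdeal I → ∀ f : I →ₗ[Rᵐᵒᵖ] M,
    ∃ g : R →ₗ[Rᵐᵒᵖ] M, ∀ x : I, g x = f x


/-- The left annihilator `l(X) = {r : r * x = 0 ∀ x ∈ X}` of a subset `X ⊆ R`,
as a left ideal of `R`. -/
def leftAnn (R : Type*) [Ring R] (X : Set R) : Submodule R R where
  carrier := {r | ∀ x ∈ X, r * x = 0}
  add_mem' := by
    intro a b ha hb x hx
    rw [add_mul, ha x hx, hb x hx, add_zero]
  zero_mem' := by intro x hx; rw [zero_mul]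
  smul_mem' := by
    intro c a ha x hx
    show c * a * x = 0
    rw [mul_assoc, ha x hx, mul_zero]

/-- The right annihilator `r(X) = {r : x * r = 0 ∀ x ∈ X}` of a subset `X ⊆ R`,
as a right ideal of `R`. -/
def rightAnn (R : Type*) [Ring R] (X : Set R) : Submodule Rᵐᵒᵖ R where
  carrier := {r | ∀ x ∈ X, x * r = 0}
  add_mem' := by
    intro a b ha hb x hx
    rw [mul_add, ha x hx, hb x hx, add_zero]
  zero_mem' := by intro x hx; rw [mul_zero]
  smul_mem' := by
    intro c a ha x hx
    show x * (a * c.unop) = 0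
    rw [← mul_assoc, ha x hx, zero_mul]

private lemma isUnit_one_sub_swap {R : Type*} [Ring R] {x y : R}
    (h : IsUnit (1 - x * y)) : IsUnit (1 - y * x) := by
  refine ⟨⟨1 - y * x, 1 + y * h.unit.inv * x, ?_, ?_⟩, rfl⟩
  · calc
      (1 - y * x) * (1 + y * (IsUnit.unit h).inv * x) =
          1 - y * x + y * ((1 - x * y) * h.unit.inv) * x := by noncomm_ring
      _ = 1 := by simp only [Units.inv_eq_val_inv, IsUnit.mul_val_inv, mul_one, sub_add_cancel]
  · calc
      (1 + y * (IsUnit.unit h).inv * x) * (1 - y * x) =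
          1 - y * x + y * (h.unit.inv * (1 - x * y)) * x := by noncomm_ring
      _ = 1 := by simp only [Units.inv_eq_val_inv, IsUnit.val_inv_mul, mul_one, sub_add_cancel]

private lemma jac_isUnit_one_sub_mul {R : Type*} [Ring R] {a : R}
    (ha : a ∈ (⊥ : Ideal R).jacobson) (r : R) : IsUnit (1 - r * a) := by
  obtain ⟨z, hz⟩ := Ideal.mem_jacobson_iff.1 ha (-r)
  rw [Ideal.mem_bot, sub_eq_zero] at hz
  -- hz : z * (-r) * a + z = 1
  have hz1 : z * (1 - r * a) = 1 := by nth_rewrite 2 [← hz]; noncomm_ring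
  have hzJ : z - 1 ∈ (⊥ : Ideal R).jacobson := by
    have h2 : z - 1 = z * r * a := by rw [← hz]; noncomm_ring
    rw [h2, mul_assoc]
    exact Ideal.mul_mem_left _ _ ((⊥ : Ideal R).jacobson.mul_mem_left r ha)
  obtain ⟨w, hw⟩ := Ideal.mem_jacobson_iff.1 hzJ 1
  rw [Ideal.mem_bot, sub_eq_zero] at hw
  -- hw : w * 1 * (z - 1) + w = 1
  have hw2 : w * z = 1 := by rw [← hw]; noncomm_ring
  have hw3 : 1 - r * a = w := by
    calc 1 - r * a = w * z * (1 - r * a) := by rw [hw2, one_mul]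
      _ = w * (z * (1 - r * a)) := by rw [mul_assoc]
      _ = w := by rw [hz1, mul_one]
  exact ⟨⟨1 - r * a, z, by rw [hw3, hw2], hz1⟩, rfl⟩

/-- If `R` is right small injective, then every principal small left ideal is a left
annihilator: for `a ∈ J(R)`, `Ra = l(r(a))`. -/
theorem stmt_8 {R : Type*} [Ring R] (h : SmallInjective R R)
    (a : R) (ha : a ∈ (⊥ : Ideal R).jacobson) :
    Submodule.span R ({a} : Set R) = leftAnn R ↑(rightAnn R ({a} : Set R)) := by
  apply le_antisymm
  · rw [Submodule.span_le, Set.singleton_subset_iff]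
    exact fun x hx => hx a rfl
  · intro b hb
    have hb' : ∀ x : R, a * x = 0 → b * x = 0 := by
      intro x hx
      exact hb x (fun z hz => by rw [Set.mem_singleton_iff] at hz; rw [hz]; exact hx)
    set La := LinearMap.toSpanSingleton Rᵐᵒᵖ R a with hLa
    set Lb := LinearMap.toSpanSingleton Rᵐᵒᵖ R b with hLb
    have hLa_app : ∀ c : Rᵐᵒᵖ, La c = a * c.unop := by
      intro c; rw [hLa, LinearMap.toSpanSingleton_apply]; rfl
    have hLb_app : ∀ c : Rᵐᵒᵖ, Lb c = b * c.unop := by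
      intro c; rw [hLb, LinearMap.toSpanSingleton_apply]; rfl
    have hle : LinearMap.ker La ≤ LinearMap.ker Lb := by
      intro c hc
      rw [LinearMap.mem_ker] at hc ⊢
      rw [hLa_app] at hc
      rw [hLb_app]
      exact hb' _ hc
    have hsmall : IsSmallRightIdeal (LinearMap.range La) := by
      intro K hK
      have h1 : (1 : R) ∈ LinearMap.range La ⊔ K := hK ▸ Submodule.mem_top
      obtain ⟨y, hy, z, hz, hyz⟩ := Submodule.mem_sup.1 h1
      obtain ⟨c, rfl⟩ := hy
      have hu : IsUnit (1 - a * c.unop) :=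
        isUnit_one_sub_swap (jac_isUnit_one_sub_mul ha c.unop)
      have hz1 : z = 1 - a * c.unop := by
        rw [hLa_app] at hyz
        exact eq_sub_of_add_eq' hyz
      obtain ⟨u, hu'⟩ := hu
      have h1K : (1 : R) ∈ K := by
        have hm := K.smul_mem (MulOpposite.op ((u⁻¹ : Rˣ) : R)) hz
        have : MulOpposite.op ((u⁻¹ : Rˣ) : R) • z = 1 := by
          show z * ((u⁻¹ : Rˣ) : R) = 1
          rw [hz1, ← hu', Units.mul_inv]
        rwa [this] at hm
      rw [Submodule.eq_top_iff']
      intro x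
      have hm := K.smul_mem (MulOpposite.op x) h1K
      have : MulOpposite.op x • (1 : R) = x := one_mul x
      rwa [this] at hm
    let e := La.quotKerEquivRange
    let f : LinearMap.range La →ₗ[Rᵐᵒᵖ] R :=
      ((LinearMap.ker La).liftQ Lb hle).comp (e.symm : LinearMap.range La →ₗ[Rᵐᵒᵖ] _)
    obtain ⟨g, hg⟩ := h _ hsmall f
    have hamem : a ∈ LinearMap.range La :=
      ⟨MulOpposite.op 1, by rw [hLa_app]; exact mul_one a⟩
    have hgb : g a = b := by
      have key := hg ⟨a, hamem⟩
      have hsymm : e.symm ⟨a, hamem⟩ = Submodule.Quotient.mk (MulOpposite.op 1) := by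
        rw [LinearEquiv.symm_apply_eq]
        apply Subtype.ext
        show a = _
        rw [LinearMap.quotKerEquivRange_apply_mk, hLa_app]
        exact (mul_one a).symm
      rw [key]
      show ((LinearMap.ker La).liftQ Lb hle) (e.symm ⟨a, hamem⟩) = b
      rw [hsymm, Submodule.liftQ_apply, hLb_app]
      exact mul_one b
    rw [Submodule.mem_span_singleton]
    refine ⟨g 1, ?_⟩
    calc g 1 • a = g 1 * a := smul_eq_mul _ _
      _ = MulOpposite.op a • g 1 := (op_smul_eq_mul _ _).symm
      _ = g (MulOpposite.op a • (1 : R)) := (g.map_smul _ _).symm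
      _ = g a := by rw [op_smul_eq_mul, one_mul]
      _ = b := hgb
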